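/- Let C be an ideal of R[z]/(z^n - 1) where R = Z4[v]/(v^2), and let φ: R[z]/(z^n-1) → Z4[z]/(z^n-1) be induced by reduction modulo v. Then φ(C) is an ideal of Z4[z]/(z^n - 1), and the kernel of the restriction of φ to C equals v·D for some ideal D of Z4[z]/(z^n-1) (viewing v·Z4[z]/(z^n-1) as a Z4[z]/(z^n-1)-module). -/

import Mathlib

open Polynomial

/-- The ring `R = Z₄[v]/(v²)`. -/
abbrev Rv : Type := Polynomial (ZMod 4) ⧸ Ideal.span {(X : Polynomial (ZMod 4)) ^ 2}

noncomputable instance : CommRing Rv := Ideal.Quotient.commRing _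

/-- The image of `v` in `R`. -/
noncomputable def vR : Rv := Ideal.Quotient.mk _ X

/-- The embedding `Z₄ → R`. -/
noncomputable def ι4R : ZMod 4 →+* Rv :=
  (Ideal.Quotient.mk (Ideal.span {(X : Polynomial (ZMod 4)) ^ 2})).comp Polynomial.C

/-- `R[z]/(zⁿ - 1)`. -/
abbrev Rz (n : ℕ) : Type := Polynomial Rv ⧸ Ideal.span {(X : Polynomial Rv) ^ n - 1}

/-- `Z₄[z]/(zⁿ - 1)`. -/
abbrev Z4z (n : ℕ) : Type :=
  Polynomial (ZMod 4) ⧸ Ideal.span {(X : Polynomial (ZMod 4)) ^ n - 1}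

/-- Projection `R[z] → R[z]/(zⁿ - 1)`. -/
noncomputable def πR (n : ℕ) : Polynomial Rv →+* Rz n := Ideal.Quotient.mk _

/-- Projection `Z₄[z] → Z₄[z]/(zⁿ - 1)`. -/
noncomputable def π4 (n : ℕ) : Polynomial (ZMod 4) →+* Z4z n := Ideal.Quotient.mk _

/-- The image of `v` in `R[z]/(zⁿ - 1)`. -/
noncomputable def vz (n : ℕ) : Rz n := πR n (Polynomial.C vR)

lemma reprRv (r : Rv) : ∃ a b : ZMod 4, r = ι4R a + vR * ι4R b := by
  haveI : Nontrivial (ZMod 4) := ⟨0, 1, by decide⟩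
  obtain ⟨f, rfl⟩ := Ideal.Quotient.mk_surjective r
  set g := f %ₘ ((X : Polynomial (ZMod 4)) ^ 2) with hg
  have hmonic : ((X : Polynomial (ZMod 4)) ^ 2).Monic := monic_X_pow 2
  have hdeg : g.degree ≤ 1 := by
    have := degree_modByMonic_lt f hmonic
    rw [degree_X_pow] at this
    exact Order.le_of_lt_succ (by exact_mod_cast this)
  have hgf : Ideal.Quotient.mk (Ideal.span {(X : Polynomial (ZMod 4)) ^ 2}) f
      = Ideal.Quotient.mk _ g := by
    have : f %ₘ ((X : Polynomial (ZMod 4)) ^ 2)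
        + (X : Polynomial (ZMod 4)) ^ 2 * (f /ₘ ((X : Polynomial (ZMod 4)) ^ 2)) = f :=
      modByMonic_add_div f _
    rw [← this]
    rw [map_add, map_mul]
    have hx : Ideal.Quotient.mk (Ideal.span {(X : Polynomial (ZMod 4)) ^ 2})
        ((X : Polynomial (ZMod 4)) ^ 2) = 0 :=
      Ideal.Quotient.eq_zero_iff_mem.mpr (Ideal.subset_span rfl)
    rw [hx, zero_mul, add_zero]
  have hrepr : g = C (g.coeff 1) * X + C (g.coeff 0) := eq_X_add_C_of_degree_le_one hdeg
  refine ⟨g.coeff 0, g.coeff 1, ?_⟩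
  rw [hgf]
  conv_lhs => rw [hrepr]
  simp only [map_add, map_mul, ι4R, vR, RingHom.comp_apply]
  ring

lemma reprPoly (f : Polynomial Rv) :
    ∃ p q : Polynomial (ZMod 4), f = p.map ι4R + Polynomial.C vR * q.map ι4R := by
  induction f using Polynomial.induction_on' with
  | add f g hf hg =>
    obtain ⟨p1, q1, h1⟩ := hf
    obtain ⟨p2, q2, h2⟩ := hg
    refine ⟨p1 + p2, q1 + q2, ?_⟩
    rw [h1, h2, Polynomial.map_add, Polynomial.map_add]
    ring
  | monomial m r =>
    obtain ⟨a, b, hab⟩ := reprRv r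
    refine ⟨monomial m a, monomial m b, ?_⟩
    rw [hab, Polynomial.map_monomial, Polynomial.map_monomial, C_mul_monomial,
      ← map_add (monomial m)]

set_option maxHeartbeats 1000000 in
theorem stmt8 (n : ℕ) (hn : 0 < n)
    (φ : Rz n →+* Z4z n)
    (hφ : ∀ p q : Polynomial (ZMod 4),
      φ (πR n (p.map ι4R + Polynomial.C vR * q.map ι4R)) = π4 n p)
    (ι : Z4z n →+* Rz n)
    (hι : ∀ p : Polynomial (ZMod 4), ι (π4 n p) = πR n (p.map ι4R))
    (I : Ideal (Rz n)) :
    (∃ E : Ideal (Z4z n), (E : Set (Z4z n)) = φ '' I) ∧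
    (∃ D : Ideal (Z4z n), ∀ x : Rz n,
      (x ∈ I ∧ φ x = 0) ↔ ∃ d ∈ D, x = vz n * ι d) := by
  have hπsurj : Function.Surjective (πR n) := Ideal.Quotient.mk_surjective
  have h4surj : Function.Surjective (π4 n) := Ideal.Quotient.mk_surjective
  have hsurj : Function.Surjective φ := by
    intro y
    obtain ⟨p, rfl⟩ := h4surj y
    refine ⟨πR n (p.map ι4R), ?_⟩
    have h0 := hφ p 0
    rw [Polynomial.map_zero, mul_zero, add_zero] at h0
    exact h0
  have hprod : ∀ q : Polynomial (ZMod 4),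
      vz n * ι (π4 n q) = πR n (Polynomial.C vR * q.map ι4R) := by
    intro q
    rw [hι, vz, ← map_mul]
  have hker : ∀ d : Z4z n, φ (vz n * ι d) = 0 := by
    intro d
    obtain ⟨q, rfl⟩ := h4surj d
    rw [hprod]
    have h0 := hφ 0 q
    rw [Polynomial.map_zero, zero_add, map_zero] at h0
    exact h0
  constructor
  · refine ⟨I.map φ, ?_⟩
    ext y
    simp only [SetLike.mem_coe, Set.mem_image]
    constructor
    · intro hy
      obtain ⟨x, hx, hxy⟩ := (Ideal.mem_map_iff_of_surjective φ hsurj).mp hy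
      exact ⟨x, hx, hxy⟩
    · rintro ⟨x, hx, rfl⟩
      exact Ideal.mem_map_of_mem φ hx
  · refine ⟨{ carrier := {d | vz n * ι d ∈ I}
              add_mem' := by
                intro a b ha hb
                simp only [Set.mem_setOf_eq, map_add, mul_add] at *
                exact I.add_mem ha hb
              zero_mem' := by
                show vz n * ι 0 ∈ I
                rw [map_zero]
                exact I.mul_mem_left _ I.zero_mem
              smul_mem' := by
                intro r d hd
                simp only [smul_eq_mul, Set.mem_setOf_eq, map_mul] at *
                convert I.mul_mem_left (ι r) hd using 1
                exact mul_left_comm (vz n) (ι r) (ι d) }, ?_⟩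
    intro x
    constructor
    · rintro ⟨hxI, hx0⟩
      obtain ⟨f, rfl⟩ := hπsurj x
      obtain ⟨p, q, rfl⟩ := reprPoly f
      have hp0 : π4 n p = 0 := by
        rw [← hφ p q]; exact hx0
      have hpz : πR n (p.map ι4R) = 0 := by
        have hmem : p ∈ Ideal.span {(X : Polynomial (ZMod 4)) ^ n - 1} :=
          Ideal.Quotient.eq_zero_iff_mem.mp hp0
        obtain ⟨g, hg⟩ := Ideal.mem_span_singleton.mp hmem
        rw [hg]
        apply Ideal.Quotient.eq_zero_iff_mem.mpr
        rw [Polynomial.map_mul]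
        have hXn : ((X : Polynomial (ZMod 4)) ^ n - 1).map ι4R
            = (X : Polynomial Rv) ^ n - 1 := by
          simp [Polynomial.map_sub, Polynomial.map_pow]
        rw [hXn]
        exact Ideal.mul_mem_right _ _ (Ideal.subset_span rfl)
      have hx : πR n (p.map ι4R + Polynomial.C vR * q.map ι4R) = vz n * ι (π4 n q) := by
        rw [hprod, map_add, hpz, zero_add]
      refine ⟨π4 n q, ?_, hx⟩
      show vz n * ι (π4 n q) ∈ I
      rw [← hx]
      exact hxI
    · rintro ⟨d, hd, rfl⟩
      exact ⟨hd, hker d⟩
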